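/- A triangle-free graph G is minimally nonperfectly divisible if and only if G is 4-critical (i.e., χ(G) = 4 and χ(G − v) ≤ 3 for every vertex v). -/

import Mathlib

open SimpleGraph

variable {V : Type}

/-- The clique number of the subgraph of `G` induced on `S`. -/
noncomputable def omegaOn (G : SimpleGraph V) (S : Set V) : ℕ :=
  sSup {n | ∃ s : Finset V, ↑s ⊆ S ∧ G.IsNClique n s}

section OmegaLemmas
variable (G : SimpleGraph V) (htf : G.CliqueFree 3)
lemma omega_set_nonempty (S : Set V) : {n | ∃ s : Finset V, ↑s ⊆ S ∧ G.IsNClique n s}.Nonempty :=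
  ⟨0, ∅, by simp⟩

lemma omega_le (S : Set V) {k : ℕ}
    (h : ∀ n, ∀ s : Finset V, ↑s ⊆ S → G.IsNClique n s → n ≤ k) : omegaOn G S ≤ k := by
  apply csSup_le (omega_set_nonempty G S)
  rintro n ⟨s, hs, hns⟩
  exact h n s hs hns

include htf

lemma omega_le_two (S : Set V) : omegaOn G S ≤ 2 := by
  apply omega_le
  intro n s _ hns
  by_contra h
  exact (htf.mono (by omega)) s hns

lemma mem_le_omega {S : Set V} {n : ℕ} (s : Finset V) (hs : ↑s ⊆ S)
    (hns : G.IsNClique n s) : n ≤ omegaOn G S := by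
  apply le_csSup
  · refine ⟨2, ?_⟩
    rintro m ⟨t, ht, hmt⟩
    by_contra h
    exact (htf.mono (by omega)) t hmt
  · exact ⟨s, hs, hns⟩

omit htf in
lemma omega_empty : omegaOn G (∅ : Set V) = 0 := by
  apply Nat.le_zero.mp
  apply omega_le
  intro n s hs hns
  have : s = ∅ := by
    ext x; simp only [Finset.notMem_empty, iff_false]
    intro hx
    exact (hs hx).elim
  subst this
  simpa using hns.2.symm

lemma one_le_omega {S : Set V} (hS : S.Nonempty) : 1 ≤ omegaOn G S := by
  obtain ⟨x, hx⟩ := hS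
  exact mem_le_omega G htf {x} (by simpa using hx) (by simp)

lemma omega_eq_two {S : Set V} {x y : V} (hx : x ∈ S) (hy : y ∈ S) (hxy : G.Adj x y) :
    omegaOn G S = 2 := by
  refine le_antisymm (omega_le_two G htf S) ?_
  classical
  refine mem_le_omega G htf {x, y} ?_ ?_
  · intro a ha
    simp only [Finset.coe_insert, Finset.coe_singleton, Set.mem_insert_iff,
      Set.mem_singleton_iff] at ha
    rcases ha with rfl | rfl <;> assumption
  · have : G.IsNClique 2 (insert x {y}) := by
      refine (isNClique_singleton.mpr rfl).insert ?_
      intro b hb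
      simp only [Finset.mem_singleton] at hb
      subst hb; exact hxy
    simpa using this

lemma omega_eq_one {S : Set V} (hS : S.Nonempty)
    (hne : ∀ x ∈ S, ∀ y ∈ S, ¬ G.Adj x y) : omegaOn G S = 1 := by
  refine le_antisymm ?_ (one_le_omega G htf hS)
  apply omega_le
  intro n s hs hns
  by_contra h
  have h2 : 1 < s.card := by rw [hns.2]; omega
  obtain ⟨x, hx, y, hy, hxy⟩ := Finset.one_lt_card.mp h2
  exact hne x (hs hx) y (hs hy) (hns.1 hx hy hxy)

end OmegaLemmas


section ChiLemmas
variable (G : SimpleGraph V)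

lemma chi_mono {S T : Set V} (hST : S ⊆ T) :
    (G.induce S).chromaticNumber ≤ (G.induce T).chromaticNumber :=
  chromaticNumber_mono_of_hom (G.induceHomOfLE hST).toHom

lemma chi_empty {T : Set V} (hT : T = ∅) : (G.induce T).chromaticNumber = 0 := by
  subst hT
  have : IsEmpty (∅ : Set V) := by
    constructor; rintro ⟨x, hx⟩; exact hx
  exact (G.induce (∅ : Set V)).chromaticNumber_eq_zero_of_isEmpty

lemma chi_le_one {T : Set V} (hne : ∀ x ∈ T, ∀ y ∈ T, ¬ G.Adj x y) :
    (G.induce T).chromaticNumber ≤ 1 := by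
  rw [show (1 : ℕ∞) = ((1 : ℕ) : ℕ∞) by rfl, chromaticNumber_le_iff_colorable]
  refine ⟨Coloring.mk (fun _ => 0) ?_⟩
  rintro ⟨x, hx⟩ ⟨y, hy⟩ hadj
  exact absurd hadj (hne x hx y hy)

lemma one_le_chi [Finite V] {T : Set V} (hT : T.Nonempty) :
    1 ≤ (G.induce T).chromaticNumber := by
  have : Nonempty T := hT.to_subtype
  have hcol := (G.induce T).colorable_chromaticNumber_of_fintype
  have h0 := chromaticNumber_pos hcol
  exact Order.one_le_iff_pos.mpr h0

lemma two_le_chi {T : Set V} {x y : V} (hx : x ∈ T) (hy : y ∈ T) (hxy : G.Adj x y) :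
    2 ≤ (G.induce T).chromaticNumber := by
  by_contra h
  rw [not_le] at h
  have h1 : (G.induce T).chromaticNumber ≤ 1 := (by
    simpa using h)
  rw [show (1 : ℕ∞) = ((1 : ℕ) : ℕ∞) by rfl, chromaticNumber_le_iff_colorable] at h1
  obtain ⟨c⟩ := h1
  exact c.valid (show (G.induce T).Adj ⟨x, hx⟩ ⟨y, hy⟩ from hxy) (Subsingleton.elim _ _)

end ChiLemmas

lemma omega_le_one_of_edgeless (G : SimpleGraph V) {T : Set V}
    (hne : ∀ x ∈ T, ∀ y ∈ T, ¬ G.Adj x y) : omegaOn G T ≤ 1 := by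
  apply omega_le
  intro n s hs hns
  by_contra h
  have h2 : 1 < s.card := by rw [hns.2]; omega
  obtain ⟨x, hx, y, hy, hxy⟩ := Finset.one_lt_card.mp h2
  exact hne x (hs hx) y (hs hy) (hns.1 hx hy hxy)

/-- The subgraph of `G` induced on `S` is a perfect graph. -/
def IsPerfectOn (G : SimpleGraph V) (S : Set V) : Prop :=
  ∀ T : Set V, T ⊆ S → (G.induce T).chromaticNumber = (omegaOn G T : ℕ∞)

lemma isPerfectOn_of_colorable_two [Finite V] (G : SimpleGraph V) (htf : G.CliqueFree 3)
    {A : Set V} (h2 : (G.induce A).Colorable 2) : IsPerfectOn G A := by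
  intro T hTA
  by_cases hTe : T = ∅
  · rw [chi_empty G hTe, hTe, omega_empty]; rfl
  · have hTne : T.Nonempty := Set.nonempty_iff_ne_empty.mpr hTe
    by_cases hedge : ∃ x ∈ T, ∃ y ∈ T, G.Adj x y
    · obtain ⟨x, hx, y, hy, hxy⟩ := hedge
      rw [omega_eq_two G htf hx hy hxy]
      refine le_antisymm ?_ (two_le_chi G hx hy hxy)
      have : (G.induce T).Colorable 2 :=
        Colorable.of_hom (G.induceHomOfLE hTA).toHom h2
      have := this.chromaticNumber_le
      rwa [show ((2 : ℕ) : ℕ∞) = 2 by rfl] at this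
    · push_neg at hedge
      rw [omega_eq_one G htf hTne hedge]
      exact le_antisymm (by simpa using chi_le_one G hedge) (one_le_chi G hTne)

/-- Every nonempty induced subgraph of `G[S]` admits a perfect division. -/
def PerfDivOn (G : SimpleGraph V) (S : Set V) : Prop :=
  ∀ H : Set V, H ⊆ S → H.Nonempty →
    ∃ A B : Set V, A ∪ B = H ∧ Disjoint A B ∧
      IsPerfectOn G A ∧ omegaOn G B < omegaOn G H

lemma perfDiv_iff [Finite V] (G : SimpleGraph V) (htf : G.CliqueFree 3) (S : Set V) :
    PerfDivOn G S ↔ (G.induce S).chromaticNumber ≤ 3 := by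
  classical
  constructor
  · intro h
    by_cases hSe : S = ∅
    · rw [chi_empty G hSe]; exact zero_le
    have hSne : S.Nonempty := Set.nonempty_iff_ne_empty.mpr hSe
    obtain ⟨A, B, hAB, hdisj, hA, hω⟩ := h S subset_rfl hSne
    by_cases hedge : ∃ x ∈ S, ∃ y ∈ S, G.Adj x y
    · obtain ⟨x, hx, y, hy, hxy⟩ := hedge
      rw [omega_eq_two G htf hx hy hxy] at hω
      -- B is edgeless
      have hBe : ∀ u ∈ B, ∀ v ∈ B, ¬ G.Adj u v := by
        intro u hu v hv huv
        rw [omega_eq_two G htf hu hv huv] at hω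
        exact lt_irrefl _ hω
      -- A is 2-colorable
      have hA2 : (G.induce A).Colorable 2 := by
        have hχ := hA A subset_rfl
        have hωA : omegaOn G A ≤ 2 := omega_le_two G htf A
        have : (G.induce A).chromaticNumber ≤ ((2 : ℕ) : ℕ∞) := by
          rw [hχ]; exact_mod_cast hωA
        rwa [chromaticNumber_le_iff_colorable] at this
      obtain ⟨cA⟩ := hA2
      have hcol : (G.induce S).Colorable 3 := by
        refine ⟨Coloring.mk
          (fun v => if h : (v : V) ∈ A then (cA ⟨v, h⟩).castSucc else 2) ?_⟩
        rintro ⟨u, hu⟩ ⟨v, hv⟩ hadj heq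
        have hadj' : G.Adj u v := hadj
        by_cases hu' : u ∈ A <;> by_cases hv' : v ∈ A <;>
          simp only [hu', hv', dif_pos, dif_neg, not_false_iff] at heq
        · exact cA.valid (show (G.induce A).Adj ⟨u, hu'⟩ ⟨v, hv'⟩ from hadj')
            (Fin.castSucc_injective _ heq)
        · have := (cA ⟨u, hu'⟩).isLt
          have h2 := congrArg Fin.val heq
          simp only [Fin.coe_castSucc, Fin.val_two] at h2
          omega
        · have := (cA ⟨v, hv'⟩).isLt
          have h2 := congrArg Fin.val heq
          simp only [Fin.coe_castSucc, Fin.val_two] at h2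
          omega
        · have huB : u ∈ B := by
            have := hAB ▸ hu
            rcases (hAB ▸ hu : u ∈ A ∪ B) with h | h
            · exact absurd h hu'
            · exact h
          have hvB : v ∈ B := by
            rcases (hAB ▸ hv : v ∈ A ∪ B) with h | h
            · exact absurd h hv'
            · exact h
          exact hBe u huB v hvB hadj'
      have := hcol.chromaticNumber_le
      rwa [show ((3 : ℕ) : ℕ∞) = 3 by rfl] at this
    · push_neg at hedge
      calc (G.induce S).chromaticNumber ≤ 1 := chi_le_one G hedge
        _ ≤ 3 := by norm_num
  · intro h3 H hHS hHne
    have hcol : (G.induce S).Colorable 3 := by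
      rwa [show (3 : ℕ∞) = ((3 : ℕ) : ℕ∞) by rfl, chromaticNumber_le_iff_colorable] at h3
    obtain ⟨c⟩ := hcol
    set f : V → Fin 3 := fun v => if h : v ∈ S then c ⟨v, h⟩ else 0 with hf
    by_cases hedge : ∃ x ∈ H, ∃ y ∈ H, G.Adj x y
    · obtain ⟨x, hx, y, hy, hxy⟩ := hedge
      refine ⟨{v ∈ H | f v ≠ 2}, {v ∈ H | f v = 2}, ?_, ?_, ?_, ?_⟩
      · ext v; by_cases hfv : f v = 2 <;> simp [hfv]
      · rw [Set.disjoint_left]; rintro v ⟨_, hv⟩ ⟨_, hv'⟩; exact hv hv'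
      · refine isPerfectOn_of_colorable_two G htf ?_
        refine ⟨Coloring.mk (fun v => if f (v : V) = 0 then 0 else 1) ?_⟩
        rintro ⟨u, hu, hu2⟩ ⟨v, hv, hv2⟩ hadj heq
        have hadj' : G.Adj u v := hadj
        have hfu : f u = c ⟨u, hHS hu⟩ := dif_pos (hHS hu)
        have hfv : f v = c ⟨v, hHS hv⟩ := dif_pos (hHS hv)
        have hne : f u ≠ f v := by
          rw [hfu, hfv]
          exact c.valid (show (G.induce S).Adj ⟨u, hHS hu⟩ ⟨v, hHS hv⟩ from hadj')
        by_cases h0 : f u = 0 <;> by_cases h1 : f v = 0 <;>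
          simp only [h0, h1, if_pos, if_neg, not_false_iff] at heq ⊢
        · exact hne (h0.trans h1.symm)
        · exact absurd heq (by norm_num)
        · exact absurd heq (by norm_num)
        · -- f u, f v ∈ {1} since ≠ 0, ≠ 2 : contradiction with hne
          have l2 : (f u : ℕ) < 3 := (f u).isLt
          have l3 : (f v : ℕ) < 3 := (f v).isLt
          have n0 : (f u : ℕ) ≠ 0 := fun h => h0 (Fin.ext h)
          have n1 : (f v : ℕ) ≠ 0 := fun h => h1 (Fin.ext h)
          have n2 : (f u : ℕ) ≠ 2 := fun h => hu2 (Fin.ext h)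
          have n3 : (f v : ℕ) ≠ 2 := fun h => hv2 (Fin.ext h)
          exact hne (Fin.ext (by omega))
      · rw [omega_eq_two G htf hx hy hxy]
        have : omegaOn G {v ∈ H | f v = 2} ≤ 1 := by
          apply omega_le_one_of_edgeless
          rintro u ⟨hu, hu2⟩ v ⟨hv, hv2⟩ hadj
          have : f u ≠ f v := by
            simp only [hf]
            rw [dif_pos (hHS hu), dif_pos (hHS hv)]
            exact c.valid (show (G.induce S).Adj ⟨u, hHS hu⟩ ⟨v, hHS hv⟩ from hadj)
          exact this (hu2.trans hv2.symm)
        omega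
    · push_neg at hedge
      refine ⟨H, ∅, Set.union_empty H, Set.disjoint_empty _, ?_, ?_⟩
      · refine isPerfectOn_of_colorable_two G htf ?_
        refine (Colorable.mono (by norm_num) ⟨Coloring.mk (fun _ => (0 : Fin 1)) ?_⟩)
        rintro ⟨u, hu⟩ ⟨v, hv⟩ hadj
        exact absurd (show G.Adj u v from hadj) (hedge u hu v hv)
      · rw [omega_empty]
        have := one_le_omega G htf hHne
        omega

lemma colorable_four (G : SimpleGraph V) (v : V)
    (h : (G.induce ({v}ᶜ : Set V)).Colorable 3) : G.Colorable 4 := by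
  classical
  obtain ⟨c⟩ := h
  refine ⟨Coloring.mk (fun u => if h : u = v then 3 else
    (c ⟨u, Set.mem_compl_singleton_iff.mpr h⟩).castSucc) ?_⟩
  intro u w hadj heq
  beta_reduce at heq
  have hv3 : ((3 : Fin 4)).val = 3 := rfl
  by_cases hu : u = v
  · by_cases hw : w = v
    · exact hadj.ne (hu.trans hw.symm)
    · rw [dif_pos hu, dif_neg hw] at heq
      have := (c ⟨w, Set.mem_compl_singleton_iff.mpr hw⟩).isLt
      have h2 := congrArg Fin.val heq
      simp only [Fin.coe_castSucc, hv3] at h2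
      omega
  · by_cases hw : w = v
    · rw [dif_neg hu, dif_pos hw] at heq
      have := (c ⟨u, Set.mem_compl_singleton_iff.mpr hu⟩).isLt
      have h2 := congrArg Fin.val heq
      simp only [Fin.coe_castSucc, hv3] at h2
      omega
    · rw [dif_neg hu, dif_neg hw] at heq
      exact c.valid
        (show (G.induce ({v}ᶜ : Set V)).Adj ⟨u, Set.mem_compl_singleton_iff.mpr hu⟩
          ⟨w, Set.mem_compl_singleton_iff.mpr hw⟩ from hadj)
        (Fin.castSucc_injective _ heq)

/-- `G` is minimally nonperfectly divisible. -/
def MNPD (G : SimpleGraph V) : Prop :=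
  ¬ PerfDivOn G Set.univ ∧ ∀ S : Set V, S ≠ Set.univ → PerfDivOn G S

/-- The external neighbourhood `N(X)`. -/
def extNbhd (G : SimpleGraph V) (X : Set V) : Set V :=
  {v | v ∉ X ∧ ∃ x ∈ X, G.Adj v x}

theorem stmt_19 [Fintype V] (G : SimpleGraph V) (htf : G.CliqueFree 3) :
    MNPD G ↔
      (G.chromaticNumber = 4 ∧
        ∀ v : V, (G.induce ({v}ᶜ : Set V)).chromaticNumber ≤ 3) := by
  have chiuniv : (G.induce Set.univ).chromaticNumber = G.chromaticNumber :=
    le_antisymm (chromaticNumber_mono_of_hom G.induceUnivIso.toEmbedding.toHom)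
      (chromaticNumber_mono_of_hom G.induceUnivIso.symm.toEmbedding.toHom)
  constructor
  · rintro ⟨h1, h2⟩
    have hdel : ∀ v : V, (G.induce ({v}ᶜ : Set V)).chromaticNumber ≤ 3 := by
      intro v
      refine (perfDiv_iff G htf _).mp (h2 _ ?_)
      intro h
      have : v ∈ ({v}ᶜ : Set V) := h ▸ Set.mem_univ v
      simp at this
    have h4 : ¬ G.chromaticNumber ≤ 3 := by
      rw [← chiuniv]
      exact fun hc => h1 ((perfDiv_iff G htf _).mpr hc)
    have hne : Nonempty V := by
      by_contra h
      rw [not_nonempty_iff] at h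
      exact h4 (by rw [G.chromaticNumber_eq_zero_of_isEmpty]; norm_num)
    obtain ⟨v⟩ := hne
    have hc4 : G.Colorable 4 := by
      refine colorable_four G v ?_
      rw [← chromaticNumber_le_iff_colorable]
      exact_mod_cast hdel v
    refine ⟨le_antisymm (by exact_mod_cast hc4.chromaticNumber_le) ?_, hdel⟩
    have h3lt : (3 : ℕ∞) < G.chromaticNumber := not_le.mp h4
    have : (3 : ℕ∞) + 1 ≤ G.chromaticNumber := Order.add_one_le_of_lt h3lt
    exact le_trans (by norm_num) this
  · rintro ⟨h1, h2⟩
    constructor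
    · intro hpd
      have := (perfDiv_iff G htf _).mp hpd
      rw [chiuniv, h1] at this
      norm_num at this
    · intro S hS
      rw [perfDiv_iff G htf]
      obtain ⟨v, hv⟩ := Set.ne_univ_iff_exists_notMem S |>.mp hS
      have hsub : S ⊆ ({v}ᶜ : Set V) := by
        intro u hu
        simp only [Set.mem_compl_iff, Set.mem_singleton_iff]
        rintro rfl; exact hv hu
      exact le_trans (chi_mono G hsub) (h2 v)
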